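/- arXiv:2104.01710 — 2 statements merged into one kernel-verified Lean document; each statement's English description precedes it below -/
import Mathlib

section
/- The function g(t) = ∫₀^{π/2} arccos((t - tan²x)/(t + tan²x)) dx is differentiable on (0,1) with derivative g'(t) = log t / (2√t(1 - t)). -/
open Real MeasureTheory

lemma aux_deriv {s u : ℝ} (hs : 0 < s) (hu : 0 < u) :
    HasDerivAt (fun s : ℝ => Real.arccos ((s - u) / (s + u)))
      (-(Real.sqrt u) / (Real.sqrt s * (s + u))) s := by
  have hsu : 0 < s + u := by linarith
  have hinner : HasDerivAt (fun s : ℝ => (s - u) / (s + u))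
      ((1 * (s + u) - (s - u) * 1) / (s + u) ^ 2) s :=
    ((hasDerivAt_id s).sub_const u).div ((hasDerivAt_id s).add_const u) hsu.ne'
  have hy1 : (s - u) / (s + u) ≠ 1 := by
    intro h; rw [div_eq_iff hsu.ne'] at h; linarith
  have hy2 : (s - u) / (s + u) ≠ -1 := by
    intro h; rw [div_eq_iff hsu.ne'] at h; nlinarith
  have := (Real.hasDerivAt_arccos hy2 hy1).comp s hinner
  refine this.congr_deriv (Eq.symm ?_)
  have h1 : 1 - ((s - u) / (s + u)) ^ 2 = 4 * s * u / (s + u) ^ 2 := by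
    field_simp; ring
  have h2 : Real.sqrt (4 * s * u / (s + u) ^ 2) = 2 * Real.sqrt s * Real.sqrt u / (s + u) := by
    rw [Real.sqrt_div (by positivity), Real.sqrt_sq hsu.le,
      show 4 * s * u = (2:ℝ) ^ 2 * (s * u) by ring, Real.sqrt_mul (by positivity),
      Real.sqrt_sq (by norm_num), Real.sqrt_mul hs.le, mul_assoc]
  rw [h1, h2]
  have h3 : Real.sqrt s > 0 := Real.sqrt_pos.2 hs
  have h4 : Real.sqrt u > 0 := Real.sqrt_pos.2 hu
  have h5 : Real.sqrt s * Real.sqrt s = s := Real.mul_self_sqrt hs.le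
  have h6 : Real.sqrt u * Real.sqrt u = u := Real.mul_self_sqrt hu.le
  field_simp
  linear_combination (-2) * h6

lemma aux_key {t : ℝ} (ht : 0 < t) (ht1 : t < 1) (x : ℝ) :
    -Real.tan x / (Real.sqrt t * (t + Real.tan x ^ 2))
      = -(Real.sin x * Real.cos x) / (Real.sqrt t * (t + (1 - t) * Real.sin x ^ 2)) := by
  by_cases hc : Real.cos x = 0
  · simp [Real.tan_eq_sin_div_cos, hc]
  · have hden1 : t + Real.tan x ^ 2 > 0 := by positivity
    have hc2 : 0 < Real.cos x ^ 2 := by positivity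
    have hden2 : t + (1 - t) * Real.sin x ^ 2 > 0 := by
      nlinarith [Real.sin_sq_add_cos_sq x, sq_nonneg (Real.sin x)]
    have hst : Real.sqrt t ≠ 0 := (Real.sqrt_pos.2 ht).ne'
    rw [Real.tan_eq_sin_div_cos] at *
    rw [div_eq_div_iff (by positivity) (by positivity)]
    field_simp
    linear_combination (Real.sin x * t) * Real.sin_sq_add_cos_sq x

lemma aux_int {t : ℝ} (ht : 0 < t) (ht1 : t < 1) :
    ∫ x in (0:ℝ)..(π / 2), -Real.tan x / (Real.sqrt t * (t + Real.tan x ^ 2))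
      = Real.log t / (2 * Real.sqrt t * (1 - t)) := by
  have hst : 0 < Real.sqrt t := Real.sqrt_pos.2 ht
  have hden : ∀ x : ℝ, 0 < t + (1 - t) * Real.sin x ^ 2 := by
    intro x
    nlinarith [Real.sin_sq_le_one x, sq_nonneg (Real.sin x)]
  have hcont : Continuous fun x : ℝ =>
      -(Real.sin x * Real.cos x) / (Real.sqrt t * (t + (1 - t) * Real.sin x ^ 2)) := by
    apply Continuous.div
    · exact (Real.continuous_sin.mul Real.continuous_cos).neg
    · continuity
    · intro x
      exact (mul_pos hst (hden x)).ne'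
  have hH : ∀ x : ℝ, HasDerivAt
      (fun x => -Real.log (t + (1 - t) * Real.sin x ^ 2) / (2 * (1 - t) * Real.sqrt t))
      (-(Real.sin x * Real.cos x) / (Real.sqrt t * (t + (1 - t) * Real.sin x ^ 2))) x := by
    intro x
    have h1 : HasDerivAt (fun x : ℝ => t + (1 - t) * Real.sin x ^ 2)
        ((1 - t) * (2 * Real.sin x ^ 1 * Real.cos x)) x :=
      (((Real.hasDerivAt_sin x).pow 2).const_mul (1 - t)).const_add t
    have h2 := ((h1.log (hden x).ne').neg).div_const (2 * (1 - t) * Real.sqrt t)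
    refine h2.congr_deriv (Eq.symm ?_)
    have hd := (hden x).ne'
    have h1t : (1:ℝ) - t ≠ 0 := by linarith
    field_simp
  rw [show (fun x : ℝ => -Real.tan x / (Real.sqrt t * (t + Real.tan x ^ 2)))
      = fun x : ℝ => -(Real.sin x * Real.cos x) / (Real.sqrt t * (t + (1 - t) * Real.sin x ^ 2))
      from funext (aux_key ht ht1)]
  rw [intervalIntegral.integral_eq_sub_of_hasDerivAt (fun x _ => hH x)
    (hcont.intervalIntegrable 0 (π / 2))]
  rw [Real.sin_pi_div_two, Real.sin_zero]
  norm_num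
  ring

theorem stmt_4 :
    ∀ t ∈ Set.Ioo (0:ℝ) 1,
      HasDerivAt (fun s : ℝ => ∫ x in (0:ℝ)..(π / 2), arccos ((s - tan x ^ 2) / (s + tan x ^ 2)))
        (Real.log t / (2 * Real.sqrt t * (1 - t))) t := by
  rintro t ⟨ht0, ht1⟩
  have hπ : (0:ℝ) ≤ π / 2 := by positivity
  set μ : Measure ℝ := volume.restrict (Set.Ioc 0 (π / 2)) with hμ
  haveI : IsFiniteMeasure μ := by
    constructor
    rw [hμ, Measure.restrict_apply_univ]
    exact measure_Ioc_lt_top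
  have htan : Measurable Real.tan := by
    have : Real.tan = fun x => Real.sin x / Real.cos x :=
      funext fun x => Real.tan_eq_sin_div_cos x
    rw [this]; exact Real.measurable_sin.div Real.measurable_cos
  have hmeas : ∀ s : ℝ, AEStronglyMeasurable
      (fun x => arccos ((s - tan x ^ 2) / (s + tan x ^ 2))) μ := by
    intro s
    exact (Real.continuous_arccos.measurable.comp
      (((measurable_const.sub (htan.pow_const 2)).div
        (measurable_const.add (htan.pow_const 2))))).aestronglyMeasurable
  have hF'meas : AEStronglyMeasurable
      (fun x => -tan x / (Real.sqrt t * (t + tan x ^ 2))) μ :=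
    (htan.neg.div (measurable_const.mul
      (measurable_const.add (htan.pow_const 2)))).aestronglyMeasurable
  have hFint : Integrable (fun x => arccos ((t - tan x ^ 2) / (t + tan x ^ 2))) μ := by
    refine (integrable_const π).mono' (hmeas t) ?_
    filter_upwards with x
    rw [Real.norm_eq_abs, abs_of_nonneg (Real.arccos_nonneg _)]
    exact Real.arccos_le_pi _
  have hae : ∀ᵐ x ∂μ, x ∈ Set.Ioo 0 (π / 2) := by
    have h1 : ∀ᵐ x ∂μ, x ∈ Set.Ioc 0 (π / 2) := ae_restrict_mem measurableSet_Ioc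
    have h2 : ∀ᵐ x ∂μ, x ≠ π / 2 := by
      refine MeasureTheory.ae_iff.2 ?_
      rw [show {x : ℝ | ¬x ≠ π / 2} = {π / 2} by ext y; simp, hμ,
        Measure.restrict_apply (measurableSet_singleton _)]
      exact measure_mono_null Set.inter_subset_left (Real.volume_singleton)
    filter_upwards [h1, h2] with x hx hne
    exact ⟨hx.1, lt_of_le_of_ne hx.2 hne⟩
  have hball : ∀ s ∈ Metric.ball t (t / 2), t / 2 < s := by
    intro s hs
    rw [Metric.mem_ball, Real.dist_eq] at hs
    have := abs_lt.1 hs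
    linarith [this.1]
  have h_bound : ∀ᵐ x ∂μ, ∀ s ∈ Metric.ball t (t / 2),
      ‖-tan x / (Real.sqrt s * (s + tan x ^ 2))‖ ≤ 1 / t := by
    filter_upwards [hae] with x hx s hs
    have htx : 0 < tan x := Real.tan_pos_of_pos_of_lt_pi_div_two hx.1 hx.2
    have hs0 : 0 < s := lt_trans (by linarith) (hball s hs)
    have hss : t / 2 < s := hball s hs
    have hsq : 0 < Real.sqrt s := Real.sqrt_pos.2 hs0
    have hden : 0 < Real.sqrt s * (s + tan x ^ 2) := by positivity
    rw [Real.norm_eq_abs, abs_div, abs_of_pos hden, abs_neg, abs_of_pos htx,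
      div_le_div_iff₀ hden ht0]
    nlinarith [mul_nonneg hsq.le (sq_nonneg (Real.sqrt s - tan x)),
      Real.sq_sqrt hs0.le, mul_pos (show (0:ℝ) < 2 * s - t by linarith) htx]
  have h_diff : ∀ᵐ x ∂μ, ∀ s ∈ Metric.ball t (t / 2),
      HasDerivAt (fun s => arccos ((s - tan x ^ 2) / (s + tan x ^ 2)))
        (-tan x / (Real.sqrt s * (s + tan x ^ 2))) s := by
    filter_upwards [hae] with x hx s hs
    have htx : 0 < tan x := Real.tan_pos_of_pos_of_lt_pi_div_two hx.1 hx.2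
    have hs0 : 0 < s := lt_trans (by linarith) (hball s hs)
    have hu : 0 < tan x ^ 2 := by positivity
    have := aux_deriv hs0 hu
    simpa [Real.sqrt_sq htx.le] using this
  obtain ⟨-, hd⟩ := hasDerivAt_integral_of_dominated_loc_of_deriv_le
    (F' := fun s x => -tan x / (Real.sqrt s * (s + tan x ^ 2)))
    (Metric.ball_mem_nhds t (show (0:ℝ) < t / 2 by linarith))
    (Filter.Eventually.of_forall hmeas) hFint hF'meas h_bound
    (integrable_const (1 / t)) h_diff
  have heq : (fun s : ℝ => ∫ x in (0:ℝ)..(π / 2), arccos ((s - tan x ^ 2) / (s + tan x ^ 2)))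
      = fun s => ∫ x, arccos ((s - tan x ^ 2) / (s + tan x ^ 2)) ∂μ :=
    funext fun s => intervalIntegral.integral_of_le hπ
  rw [heq]
  refine hd.congr_deriv (Eq.symm ?_)
  rw [← aux_int ht0 ht1, intervalIntegral.integral_of_le hπ]
end

section
/- ∫₀¹ log t / (2√t(1 - t)) dt = -π²/4. -/
open Real MeasureTheory Set intervalIntegral


-- odd sum
lemma odd_sq_sum : HasSum (fun n : ℕ => (1:ℝ)/(2*(n:ℝ)+1)^2) (π^2/8) := by
  have h := hasSum_zeta_two
  set f : ℕ → ℝ := fun n => 1/(n:ℝ)^2 with hf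
  have heven : HasSum (fun k : ℕ => f (2*k)) (π^2/6/4) := by
    have h4 := h.div_const 4
    convert h4 using 1
    · rfl
    funext n
    simp only [hf]
    push_cast
    rw [show ((2:ℝ)*n)^2 = (n:ℝ)^2*4 by ring, div_div]
  have hso : Summable (fun k : ℕ => f (2*k+1)) :=
    h.summable.comp_injective (fun a b hab => by omega)
  obtain ⟨T, hT⟩ := hso
  have htot : HasSum f (π^2/6/4 + T) := heven.even_add_odd hT
  have hTval : T = π^2/8 := by
    have := htot.unique h; linarith
  rw [hTval] at hT
  convert hT using 1
  funext n
  simp only [hf]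
  push_cast
  ring_nf


lemma intgr {c : ℝ} (hc : 0 < c) :
    IntegrableOn (fun t : ℝ => Real.log t * t ^ (c - 1)) (Ioc 0 1) volume := by
  have hmeas : AEStronglyMeasurable (fun t : ℝ => Real.log t * t ^ (c - 1))
      (volume.restrict (Ioc 0 1)) := by
    apply ContinuousOn.aestronglyMeasurable _ measurableSet_Ioc
    intro x hx
    exact ((Real.continuousAt_log hx.1.ne').mul
      (Real.continuousAt_rpow_const x _ (Or.inl hx.1.ne'))).continuousWithinAt
  have hg : IntegrableOn (fun t : ℝ => (2/c) * t ^ (c/2 - 1)) (Ioc 0 1) volume := by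
    have := (intervalIntegral.intervalIntegrable_rpow' (by linarith : (-1:ℝ) < c/2 - 1)
      (a := 0) (b := 1))
    rw [intervalIntegrable_iff_integrableOn_Ioc_of_le zero_le_one] at this
    exact this.const_mul _
  refine hg.integrable.mono hmeas ?_
  rw [ae_restrict_iff' measurableSet_Ioc]
  filter_upwards with t ht
  have ht0 : 0 < t := ht.1
  have ht1 : t ≤ 1 := ht.2
  have hlog : Real.log t ≤ 0 := Real.log_nonpos ht0.le ht1
  have hb : -Real.log t ≤ (2/c) * t ^ (-(c/2)) := by
    have h1 : Real.log (t ^ (-(c/2))) ≤ t ^ (-(c/2)) - 1 :=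
      Real.log_le_sub_one_of_pos (Real.rpow_pos_of_pos ht0 _)
    rw [Real.log_rpow ht0] at h1
    have h2 : (0:ℝ) < t ^ (-(c/2)) := Real.rpow_pos_of_pos ht0 _
    rw [div_mul_eq_mul_div, le_div_iff₀ hc]
    nlinarith
  have hrp : (0:ℝ) ≤ t ^ (c - 1) := (Real.rpow_pos_of_pos ht0 _).le
  rw [Real.norm_eq_abs, abs_mul, abs_of_nonneg hrp, abs_of_nonpos hlog,
    Real.norm_eq_abs]
  have key : -Real.log t * t ^ (c - 1) ≤ (2/c) * t ^ (c/2 - 1) := by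
    calc -Real.log t * t ^ (c - 1) ≤ ((2/c) * t ^ (-(c/2))) * t ^ (c - 1) :=
          mul_le_mul_of_nonneg_right hb hrp
      _ = (2/c) * t ^ (c/2 - 1) := by
          rw [mul_assoc, ← Real.rpow_add ht0]; ring_nf
  calc -Real.log t * t ^ (c - 1) ≤ (2/c) * t ^ (c/2 - 1) := key
    _ ≤ |(2/c) * t ^ (c/2 - 1)| := le_abs_self _

lemma intA {c : ℝ} (hc : 0 < c) :
    ∫ t in (0:ℝ)..1, Real.log t * t ^ (c - 1) = -(1/c^2) := by
  have hint : IntervalIntegrable (fun t : ℝ => Real.log t * t ^ (c - 1)) volume 0 1 := by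
    rw [intervalIntegrable_iff_integrableOn_Ioc_of_le zero_le_one]
    exact intgr hc
  set F : ℝ → ℝ := fun x => x ^ c * Real.log x / c - x ^ c / c ^ 2 with hF
  have hF0 : F 0 = 0 := by simp [hF, Real.zero_rpow hc.ne']
  have hF1 : F 1 = -(1/c^2) := by simp [hF]
  have hcont : ContinuousOn F (Icc 0 1) := by
    intro x hx
    rcases eq_or_lt_of_le hx.1 with h0 | h0
    · subst h0
      have t1 : Filter.Tendsto (fun x : ℝ => x ^ c * Real.log x / c) (nhdsWithin 0 (Ioi 0))
          (nhds 0) := by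
        have := (tendsto_log_mul_rpow_nhdsGT_zero hc).div_const c
        simp only [zero_div] at this
        exact this.congr (fun x => by ring)
      have t2 : Filter.Tendsto (fun x : ℝ => x ^ c / c ^ 2) (nhdsWithin 0 (Ioi 0)) (nhds 0) := by
        have hca : ContinuousAt (fun x : ℝ => x ^ c) 0 :=
          Real.continuousAt_rpow_const 0 c (Or.inr hc.le)
        have := (hca.tendsto.div_const (c^2)).mono_left (nhdsWithin_le_nhds (s := Ioi (0:ℝ)))
        simpa [Real.zero_rpow hc.ne'] using this
      have t : Filter.Tendsto F (nhdsWithin 0 (Ioi 0)) (nhds 0) := by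
        simpa using t1.sub t2
      have : ContinuousWithinAt F (Ici 0) 0 := by
        rw [← continuousWithinAt_Ioi_iff_Ici]
        unfold ContinuousWithinAt
        rw [hF0]
        exact t
      exact this.mono Icc_subset_Ici_self
    · exact (((Real.continuousAt_rpow_const x c (Or.inl h0.ne')).mul
        (Real.continuousAt_log h0.ne')).div_const c |>.sub
        ((Real.continuousAt_rpow_const x c (Or.inl h0.ne')).div_const (c^2))).continuousWithinAt
  have hderiv : ∀ x ∈ Ioo (0:ℝ) 1, HasDerivAt F (Real.log x * x ^ (c - 1)) x := by
    intro x hx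
    have hx0 : 0 < x := hx.1
    have h1 : HasDerivAt (fun y : ℝ => y ^ c) (c * x ^ (c - 1)) x :=
      Real.hasDerivAt_rpow_const (Or.inl hx0.ne')
    have h2 : HasDerivAt Real.log x⁻¹ x := Real.hasDerivAt_log hx0.ne'
    have h3 := (h1.mul h2).div_const c |>.sub (h1.div_const (c^2))
    convert h3 using 1
    · rfl
    · rfl
    · rfl
    have hxc : x ^ c * x⁻¹ = x ^ (c - 1) := by
      rw [Real.rpow_sub_one hx0.ne']; field_simp
    rw [hxc]
    field_simp
    ring
  rw [integral_eq_sub_of_hasDerivAt_of_le zero_le_one hcont hderiv hint, hF1, hF0]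
  ring


theorem stmt_10 :
    ∫ t in (0:ℝ)..1, Real.log t / (2 * Real.sqrt t * (1 - t)) = -(π ^ 2) / 4 := by
  set G : ℕ → ℝ → ℝ := fun n t => Real.log t * t ^ ((n:ℝ) - 1/2) / 2 with hG
  have hc : ∀ n : ℕ, (0:ℝ) < (n:ℝ) + 1/2 := fun n => by positivity
  have hsub : ∀ n : ℕ, ((n:ℝ) + 1/2) - 1 = (n:ℝ) - 1/2 := fun n => by ring
  have hval : ∀ n : ℕ, ∫ t in Ioc (0:ℝ) 1, G n t = -(2/(2*(n:ℝ)+1)^2) := by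
    intro n
    rw [← intervalIntegral.integral_of_le zero_le_one]
    have : ∫ t in (0:ℝ)..1, G n t = (∫ t in (0:ℝ)..1, Real.log t * t ^ ((n:ℝ) - 1/2)) / 2 := by
      simp only [hG]
      rw [intervalIntegral.integral_div]
    rw [this, ← hsub n, intA (hc n)]
    have h2 : (2*(n:ℝ)+1) ≠ 0 := by positivity
    field_simp
  have hint : ∀ n : ℕ, IntegrableOn (G n) (Ioc (0:ℝ) 1) volume := by
    intro n
    have := (intgr (hc n)).div_const 2
    rw [hsub n] at this
    exact this
  have hnorm : ∀ n : ℕ, ∫ t in Ioc (0:ℝ) 1, ‖G n t‖ = 2/(2*(n:ℝ)+1)^2 := by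
    intro n
    have : ∫ t in Ioc (0:ℝ) 1, ‖G n t‖ = ∫ t in Ioc (0:ℝ) 1, -(G n t) := by
      apply setIntegral_congr_fun measurableSet_Ioc
      intro t ht
      have hlog : Real.log t ≤ 0 := Real.log_nonpos ht.1.le ht.2
      have hrp : (0:ℝ) ≤ t ^ ((n:ℝ) - 1/2) := (Real.rpow_pos_of_pos ht.1 _).le
      have : G n t ≤ 0 := by
        simp only [hG]
        apply div_nonpos_of_nonpos_of_nonneg _ (by norm_num)
        exact mul_nonpos_of_nonpos_of_nonneg hlog hrp
      show ‖G n t‖ = -(G n t)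
      rw [Real.norm_eq_abs, abs_of_nonpos this]
    rw [this, MeasureTheory.integral_neg, hval n]
    ring
  have hsum : Summable (fun n : ℕ => ∫ t in Ioc (0:ℝ) 1, ‖G n t‖) := by
    simp only [hnorm]
    exact (odd_sq_sum.mul_left 2).summable.congr (fun n => by rw [mul_one_div])
  have key := hasSum_integral_of_summable_integral_norm (μ := volume.restrict (Ioc (0:ℝ) 1))
    hint hsum
  -- identify the tsum with the integrand
  have hpt : ∀ t ∈ Ioc (0:ℝ) 1, (∑' n, G n t) = Real.log t / (2 * Real.sqrt t * (1 - t)) := by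
    intro t ht
    rcases eq_or_lt_of_le ht.2 with h1 | h1
    · subst h1
      simp [hG]
    · have ht0 : 0 < t := ht.1
      have hfac : ∀ n : ℕ, G n t = (Real.log t / (2 * Real.sqrt t)) * t ^ n := by
        intro n
        simp only [hG]
        rw [show ((n:ℝ) - 1/2) = (n:ℝ) + (-(1/2)) by ring, Real.rpow_add ht0,
          Real.rpow_natCast, Real.rpow_neg ht0.le, Real.sqrt_eq_rpow]
        ring
      simp only [hfac]
      rw [tsum_mul_left, tsum_geometric_of_lt_one ht0.le h1]
      have hs : (0:ℝ) < Real.sqrt t := Real.sqrt_pos.mpr ht0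
      field_simp
  have hre : ∫ t in Ioc (0:ℝ) 1, (∑' n, G n t) =
      ∫ t in (0:ℝ)..1, Real.log t / (2 * Real.sqrt t * (1 - t)) := by
    rw [setIntegral_congr_fun measurableSet_Ioc hpt,
      ← intervalIntegral.integral_of_le zero_le_one]
  rw [hre] at key
  simp only [hval] at key
  have hfin2 : HasSum (fun n : ℕ => -(2/(2*(n:ℝ)+1)^2)) (-(π^2)/4) := by
    have := odd_sq_sum.mul_left (-2)
    have heq : (fun n : ℕ => (-2) * ((1:ℝ)/(2*(n:ℝ)+1)^2)) = fun n : ℕ => -(2/(2*(n:ℝ)+1)^2) := by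
      funext n; rw [mul_one_div]; ring
    rw [heq, show (-2) * (π^2/8) = -(π^2)/4 by ring] at this
    exact this
  exact key.unique hfin2
end
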